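/- The function f(x) = x^{-2} + x^{-2/x} is increasing on the interval [8, ∞). -/

import Mathlib

open Real

theorem stmt_2 :
    StrictMonoOn (fun x : ℝ => x ^ (-2 : ℝ) + x ^ (-(2 / x))) (Set.Ici (8 : ℝ)) := by
  have hlog8 : (2:ℝ) < Real.log 8 := by
    rw [Real.lt_log_iff_exp_lt (by norm_num)]
    have h := Real.exp_one_lt_d9
    have : Real.exp 2 = Real.exp 1 * Real.exp 1 := by
      rw [← Real.exp_add]; norm_num
    nlinarith [Real.exp_pos 1]
  apply strictMonoOn_of_deriv_pos (convex_Ici 8)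
  · apply ContinuousOn.add
    · exact fun x hx => (Real.continuousAt_rpow_const x _ (Or.inl (by simp only [Set.mem_Ici] at hx; simpa using (by linarith : (0:ℝ) < x).ne'))).continuousWithinAt
    · apply ContinuousOn.rpow
      · exact continuousOn_id
      · exact (continuousOn_const.div continuousOn_id (fun x hx => by simp only [Set.mem_Ici] at hx; simpa using (by linarith : (0:ℝ) < x).ne')).neg
      · intro x hx
        simp only [Set.mem_Ici] at hx
        left
        simpa using (by linarith : (0:ℝ) < x).ne'
  · intro x hx
    rw [interior_Ici] at hx
    simp only [Set.mem_Ioi] at hx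
    have hx0 : (0:ℝ) < x := by linarith
    have hxne : x ≠ 0 := ne_of_gt hx0
    set L := Real.log x with hL
    have hL2 : (2:ℝ) < L := by
      calc (2:ℝ) < Real.log 8 := hlog8
        _ < L := Real.log_lt_log (by norm_num) hx
    -- derivative of the inner exponent u(y) = -(2/y) * log y
    have hu : HasDerivAt (fun y : ℝ => -(2 / y) * Real.log y)
        (2 / x ^ 2 * L + -(2 / x) * x⁻¹) x := by
      have h1 : HasDerivAt (fun y : ℝ => -(2 / y)) (2 / x ^ 2) x := by
        simp only [div_eq_mul_inv]
        have := ((hasDerivAt_inv hxne).const_mul (2:ℝ)).neg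
        exact (this.congr_of_eventuallyEq (Filter.Eventually.of_forall fun y => rfl)).congr_deriv (by ring)
      exact h1.mul (Real.hasDerivAt_log hxne)
    have hexp : HasDerivAt (fun y : ℝ => Real.exp (-(2 / y) * Real.log y))
        (Real.exp (-(2 / x) * L) * (2 / x ^ 2 * L + -(2 / x) * x⁻¹)) x := hu.exp
    have heq : (fun y : ℝ => y ^ (-(2 / y))) =ᶠ[nhds x]
        (fun y : ℝ => Real.exp (-(2 / y) * Real.log y)) := by
      filter_upwards [eventually_gt_nhds hx0] with y hy
      rw [Real.rpow_def_of_pos hy, mul_comm]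
    have h2 : HasDerivAt (fun y : ℝ => y ^ (-(2 / y)))
        (Real.exp (-(2 / x) * L) * (2 / x ^ 2 * L + -(2 / x) * x⁻¹)) x :=
      hexp.congr_of_eventuallyEq heq
    have h1 : HasDerivAt (fun y : ℝ => y ^ (-2 : ℝ)) ((-2) * x ^ ((-2:ℝ) - 1)) x :=
      Real.hasDerivAt_rpow_const (Or.inl hxne)
    have hD : HasDerivAt (fun y : ℝ => y ^ (-2 : ℝ) + y ^ (-(2 / y)))
        ((-2) * x ^ ((-2:ℝ) - 1) + Real.exp (-(2 / x) * L) * (2 / x ^ 2 * L + -(2 / x) * x⁻¹)) x :=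
      h1.add h2
    rw [hD.deriv]
    -- now positivity
    set E := Real.exp (-(2 / x) * L) with hE
    have hEpos : 0 < E := Real.exp_pos _
    have hErpow : E = x ^ (-(2 / x)) := by
      rw [hE, Real.rpow_def_of_pos hx0, mul_comm]
    -- key: x^(2/x - 1) < 1
    have hkey : x ^ (2 / x - 1 : ℝ) < 1 := by
      apply Real.rpow_lt_one_of_one_lt_of_neg (by linarith)
      have : 2 / x < 1 := by
        rw [div_lt_one hx0]; linarith
      linarith
    have hmul : E * x ^ (2 / x - 1 : ℝ) = x⁻¹ := by
      rw [hErpow, ← Real.rpow_add hx0, show -(2/x) + (2/x - 1) = (-1:ℝ) by ring,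
        Real.rpow_neg_one]
    have hstep : x⁻¹ < E * (L - 1) := by
      rw [← hmul]
      apply mul_lt_mul_of_pos_left _ hEpos
      linarith
    have hx3 : x ^ ((-2:ℝ) - 1) = (x ^ 3)⁻¹ := by
      rw [show ((-2:ℝ) - 1) = -(3:ℕ) by norm_num, Real.rpow_neg hx0.le, Real.rpow_natCast]
    rw [hx3]
    have hx2 : (0:ℝ) < x ^ 2 := by positivity
    have hx3' : (0:ℝ) < x ^ 3 := by positivity
    have : 2 / x ^ 2 * L + -(2 / x) * x⁻¹ = 2 / x ^ 2 * (L - 1) := by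
      field_simp; ring
    rw [this]
    have h5 : E * (2 / x ^ 2 * (L - 1)) = 2 / x ^ 2 * (E * (L - 1)) := by ring
    rw [h5]
    have h6 : 2 / x ^ 2 * x⁻¹ < 2 / x ^ 2 * (E * (L - 1)) := by
      apply mul_lt_mul_of_pos_left hstep (by positivity)
    have h7 : 2 / x ^ 2 * x⁻¹ = 2 * (x ^ 3)⁻¹ := by
      rw [div_mul_eq_mul_div, mul_comm]
      field_simp
    nlinarith
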